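/- Let T be a positive integer, let z_1,…,z_T ≥ 0 and h_1,…,h_T > 0 be real sequences, and let z_max = max_{t∈[T]} z_t and h_max = max_{t∈[T]} h_t. Then for every positive integer J it holds that G1(z_{1:T}, h_{1:T}) ≤ (3/2) · min{ ( √(2J) · ∑_{t=1}^T √(z_t h_t) )^{2/3} + ( 2^{−J/2} √(z_max h_max) )^{2/3} T^{2/3} , ( ∑_{t=1}^T √(z_t h_max) )^{2/3} }. -/

import Mathlib

open Finset

lemma key_ineq (A b : ℝ) (hA : 0 ≤ A) (hb : 0 ≤ b) :
    b / (A + b) ^ ((1:ℝ)/3) ≤ 3/2 * ((A + b) ^ ((2:ℝ)/3) - A ^ ((2:ℝ)/3)) := by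
  rcases eq_or_lt_of_le (by linarith : (0:ℝ) ≤ A + b) with h0 | hS
  · have hb0 : b = 0 := by linarith
    have hA0 : A = 0 := by linarith
    simp [hb0, hA0]
  · have h13 : (0:ℝ) < (A + b) ^ ((1:ℝ)/3) := Real.rpow_pos_of_pos hS _
    rw [div_le_iff₀ h13]
    have amgm : A ^ ((2:ℝ)/3) * (A + b) ^ ((1:ℝ)/3) ≤ (A + A + (A + b))/3 := by
      have h3 := Real.geom_mean_le_arith_mean3_weighted
        (by norm_num : (0:ℝ) ≤ 1/3) (by norm_num : (0:ℝ) ≤ 1/3) (by norm_num : (0:ℝ) ≤ 1/3)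
        hA hA hS.le (by norm_num)
      have hAA : A ^ ((1:ℝ)/3) * A ^ ((1:ℝ)/3) = A ^ ((2:ℝ)/3) := by
        rw [← Real.rpow_add' hA (by norm_num : (1:ℝ)/3 + 1/3 ≠ 0)]
        norm_num
      calc A ^ ((2:ℝ)/3) * (A + b) ^ ((1:ℝ)/3)
          = A ^ ((1:ℝ)/3) * A ^ ((1:ℝ)/3) * (A + b) ^ ((1:ℝ)/3) := by rw [hAA]
        _ ≤ 1/3 * A + 1/3 * A + 1/3 * (A + b) := h3
        _ = (A + A + (A + b))/3 := by ring
    have hSS : (A + b) ^ ((2:ℝ)/3) * (A + b) ^ ((1:ℝ)/3) = A + b := by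
      rw [← Real.rpow_add' hS.le (by norm_num : (2:ℝ)/3 + 1/3 ≠ 0)]
      norm_num
    nlinarith [amgm, hSS]

lemma sum_rpow23_le (n : ℕ) (f : ℕ → ℝ) (hf : ∀ i ∈ range n, 0 ≤ f i) :
    ∑ i ∈ range n, f i ^ ((2:ℝ)/3)
      ≤ (n:ℝ) ^ ((1:ℝ)/3) * (∑ i ∈ range n, f i) ^ ((2:ℝ)/3) := by
  rcases Nat.eq_zero_or_pos n with rfl | hn
  · simp
  have hn' : (0:ℝ) < n := by exact_mod_cast hn
  have h := Real.arith_mean_le_rpow_mean (range n) (fun _ => 1/(n:ℝ))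
      (fun i => f i ^ ((2:ℝ)/3)) (fun i _ => by positivity)
      (by rw [sum_const, card_range, nsmul_eq_mul]; field_simp)
      (fun i hi => Real.rpow_nonneg (hf i hi) _) (p := 3/2) (by norm_num)
  have hconv : ∀ i ∈ range n, (1/(n:ℝ)) * (f i ^ ((2:ℝ)/3)) ^ ((3:ℝ)/2) = (1/(n:ℝ)) * f i := by
    intro i hi
    rw [← Real.rpow_mul (hf i hi)]
    norm_num
  rw [sum_congr rfl hconv] at h
  have hL : ∑ i ∈ range n, (1/(n:ℝ)) * f i ^ ((2:ℝ)/3)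
      = (1/(n:ℝ)) * ∑ i ∈ range n, f i ^ ((2:ℝ)/3) := by rw [mul_sum]
  have hR : ∑ i ∈ range n, (1/(n:ℝ)) * f i = (1/(n:ℝ)) * ∑ i ∈ range n, f i := by rw [mul_sum]
  have hsum_nn : 0 ≤ ∑ i ∈ range n, f i := sum_nonneg hf
  have h' : (1/(n:ℝ)) * ∑ i ∈ range n, f i ^ ((2:ℝ)/3)
      ≤ ((1/(n:ℝ)) * ∑ i ∈ range n, f i) ^ ((2:ℝ)/3) := by
    have : (1:ℝ) / (3/2 : ℝ) = (2:ℝ)/3 := by norm_num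
    calc (1/(n:ℝ)) * ∑ i ∈ range n, f i ^ ((2:ℝ)/3)
        = ∑ i ∈ range n, (1/(n:ℝ)) * f i ^ ((2:ℝ)/3) := by rw [mul_sum]
      _ ≤ (∑ i ∈ range n, (1/(n:ℝ)) * f i) ^ ((1:ℝ) / (3/2)) := h
      _ = ((1/(n:ℝ)) * ∑ i ∈ range n, f i) ^ ((2:ℝ)/3) := by rw [← mul_sum, this]
  have hmr : ((1/(n:ℝ)) * ∑ i ∈ range n, f i) ^ ((2:ℝ)/3)
      = (1/(n:ℝ)) ^ ((2:ℝ)/3) * (∑ i ∈ range n, f i) ^ ((2:ℝ)/3) :=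
    Real.mul_rpow (by positivity) hsum_nn
  have hfac : (n:ℝ) * ((1/(n:ℝ)) ^ ((2:ℝ)/3)) = (n:ℝ) ^ ((1:ℝ)/3) := by
    rw [Real.div_rpow zero_le_one hn'.le, Real.one_rpow]
    rw [mul_one_div, div_eq_iff (ne_of_gt (Real.rpow_pos_of_pos hn' _)),
      ← Real.rpow_add hn']
    norm_num
  calc ∑ i ∈ range n, f i ^ ((2:ℝ)/3)
      = (n:ℝ) * ((1/(n:ℝ)) * ∑ i ∈ range n, f i ^ ((2:ℝ)/3)) := by field_simp
    _ ≤ (n:ℝ) * (((1/(n:ℝ)) * ∑ i ∈ range n, f i) ^ ((2:ℝ)/3)) := by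
        exact mul_le_mul_of_nonneg_left h' hn'.le
    _ = (n:ℝ) * ((1/(n:ℝ)) ^ ((2:ℝ)/3)) * (∑ i ∈ range n, f i) ^ ((2:ℝ)/3) := by
        rw [hmr]; ring
    _ = (n:ℝ) ^ ((1:ℝ)/3) * (∑ i ∈ range n, f i) ^ ((2:ℝ)/3) := by rw [hfac]

lemma core_lemma (a h B : ℕ → ℝ) (H : ℝ) (K : Finset ℕ)
    (ha : ∀ s ∈ K, 0 ≤ a s) (hh : ∀ s ∈ K, 0 < h s) (hH : ∀ s ∈ K, h s ≤ H)
    (hB : ∀ t ∈ K, ∑ s ∈ K.filter (fun s => s ≤ t), a s / h s ≤ B t) :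
    ∑ t ∈ K, a t / B t ^ ((1:ℝ)/3)
      ≤ 3/2 * H ^ ((1:ℝ)/3) * (∑ t ∈ K, a t) ^ ((2:ℝ)/3) := by
  revert ha hh hH hB
  induction K using Finset.induction_on_max with
  | empty => intros; simp
  | insert m s hms ih =>
    intro ha hh hH hB
    have hmnot : m ∉ s := fun hmem => lt_irrefl m (hms m hmem)
    have hmem : m ∈ insert m s := mem_insert_self m s
    have ham : 0 ≤ a m := ha m hmem
    have hHpos : (0:ℝ) < H := lt_of_lt_of_le (hh m hmem) (hH m hmem)
    set A' := ∑ t ∈ s, a t with hA'def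
    have hA'nn : 0 ≤ A' := sum_nonneg fun t ht => ha t (mem_insert_of_mem ht)
    -- induction hypothesis applies to s
    have ihs : ∑ t ∈ s, a t / B t ^ ((1:ℝ)/3) ≤ 3/2 * H ^ ((1:ℝ)/3) * A' ^ ((2:ℝ)/3) := by
      apply ih
      · exact fun t ht => ha t (mem_insert_of_mem ht)
      · exact fun t ht => hh t (mem_insert_of_mem ht)
      · exact fun t ht => hH t (mem_insert_of_mem ht)
      · intro t ht
        have := hB t (mem_insert_of_mem ht)
        rwa [filter_insert, if_neg (not_le.mpr (hms t ht))] at this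
    -- key bound for the top element
    have key : a m / B m ^ ((1:ℝ)/3)
        ≤ 3/2 * H ^ ((1:ℝ)/3) * ((A' + a m) ^ ((2:ℝ)/3) - A' ^ ((2:ℝ)/3)) := by
      rcases eq_or_lt_of_le ham with h0 | hpos
      · rw [← h0]
        simp
      · have hApos : 0 < A' + a m := by linarith
        have hBm : (A' + a m) / H ≤ B m := by
          have h3 : (insert m s).filter (fun x => x ≤ m) = insert m s := by
            apply filter_eq_self.mpr
            intro x hx
            rcases mem_insert.mp hx with rfl | hx'
            · exact le_refl x
            · exact le_of_lt (hms x hx')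
          have h4 := hB m hmem
          rw [h3] at h4
          refine le_trans ?_ h4
          have h2 : ∑ s' ∈ insert m s, a s' / H ≤ ∑ s' ∈ insert m s, a s' / h s' :=
            sum_le_sum fun s' hs' =>
              div_le_div_of_nonneg_left (ha s' hs') (hh s' hs') (hH s' hs')
          refine le_trans (le_of_eq ?_) h2
          rw [← sum_div, sum_insert hmnot, add_comm]
        have hdivpos : 0 < (A' + a m) / H := div_pos hApos hHpos
        have step1 : a m / B m ^ ((1:ℝ)/3) ≤ a m / ((A' + a m)/H) ^ ((1:ℝ)/3) :=
          div_le_div_of_nonneg_left ham (Real.rpow_pos_of_pos hdivpos _)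
            (Real.rpow_le_rpow hdivpos.le hBm (by norm_num))
        have step2 : a m / ((A' + a m)/H) ^ ((1:ℝ)/3)
            = H ^ ((1:ℝ)/3) * (a m / (A' + a m) ^ ((1:ℝ)/3)) := by
          rw [Real.div_rpow hApos.le hHpos.le, div_div_eq_mul_div]
          ring
        have step3 := key_ineq A' (a m) hA'nn ham
        calc a m / B m ^ ((1:ℝ)/3)
            ≤ H ^ ((1:ℝ)/3) * (a m / (A' + a m) ^ ((1:ℝ)/3)) := by rw [← step2]; exact step1
          _ ≤ H ^ ((1:ℝ)/3) * (3/2 * ((A' + a m) ^ ((2:ℝ)/3) - A' ^ ((2:ℝ)/3))) :=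
              mul_le_mul_of_nonneg_left step3 (Real.rpow_nonneg hHpos.le _)
          _ = 3/2 * H ^ ((1:ℝ)/3) * ((A' + a m) ^ ((2:ℝ)/3) - A' ^ ((2:ℝ)/3)) := by ring
    rw [sum_insert hmnot, sum_insert hmnot, add_comm (a m) A']
    calc a m / B m ^ ((1:ℝ)/3) + ∑ t ∈ s, a t / B t ^ ((1:ℝ)/3)
        ≤ 3/2 * H ^ ((1:ℝ)/3) * ((A' + a m) ^ ((2:ℝ)/3) - A' ^ ((2:ℝ)/3))
          + 3/2 * H ^ ((1:ℝ)/3) * A' ^ ((2:ℝ)/3) := add_le_add key ihs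
      _ = 3/2 * H ^ ((1:ℝ)/3) * (A' + a m) ^ ((2:ℝ)/3) := by ring

/-- `G1(z_{1:T}, h_{1:T}) = ∑_{t=1}^T √(z_t) / (∑_{s=1}^t √(z_s)/h_s)^{1/3}`. -/
noncomputable def G1 (T : ℕ) (z h : ℕ → ℝ) : ℝ :=
  ∑ t ∈ Finset.Icc 1 T,
    Real.sqrt (z t) / (∑ s ∈ Finset.Icc 1 t, Real.sqrt (z s) / h s) ^ ((1 : ℝ) / 3)

theorem stmt_2 (T : ℕ) (hT : 1 ≤ T) (z h : ℕ → ℝ)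
    (hz : ∀ t ∈ Finset.Icc 1 T, 0 ≤ z t)
    (hh : ∀ t ∈ Finset.Icc 1 T, 0 < h t)
    (zmax hmax : ℝ)
    (hzmax : zmax = (Finset.Icc 1 T).sup' (Finset.nonempty_Icc.mpr hT) z)
    (hhmax : hmax = (Finset.Icc 1 T).sup' (Finset.nonempty_Icc.mpr hT) h)
    (J : ℕ) (hJ : 1 ≤ J) :
    G1 T z h ≤
      3 / 2 * min
        ((Real.sqrt (2 * J) * ∑ t ∈ Finset.Icc 1 T, Real.sqrt (z t * h t)) ^ ((2 : ℝ) / 3)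
          + ((2 : ℝ) ^ (-(J : ℝ) / 2) * Real.sqrt (zmax * hmax)) ^ ((2 : ℝ) / 3)
            * (T : ℝ) ^ ((2 : ℝ) / 3))
        ((∑ t ∈ Finset.Icc 1 T, Real.sqrt (z t * hmax)) ^ ((2 : ℝ) / 3)) := by
  classical
  have h1I : 1 ∈ Finset.Icc 1 T := by simp [hT]
  have hhsub : ∀ t ∈ Finset.Icc 1 T, h t ≤ hmax := fun t ht => hhmax ▸ le_sup' h ht
  have hzsub : ∀ t ∈ Finset.Icc 1 T, z t ≤ zmax := fun t ht => hzmax ▸ le_sup' z ht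
  have hmaxpos : 0 < hmax := lt_of_lt_of_le (hh 1 h1I) (hhsub 1 h1I)
  have hzmaxnn : 0 ≤ zmax := le_trans (hz 1 h1I) (hzsub 1 h1I)
  have hG1 : G1 T z h = ∑ t ∈ Finset.Icc 1 T,
      Real.sqrt (z t) / (∑ s ∈ Finset.Icc 1 t, Real.sqrt (z s) / h s) ^ ((1:ℝ)/3) := rfl
  -- the prefix sums dominate filtered sums
  have hBle : ∀ (K : Finset ℕ), K ⊆ Finset.Icc 1 T → ∀ t ∈ K,
      ∑ s ∈ K.filter (fun s => s ≤ t), Real.sqrt (z s) / h s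
        ≤ ∑ s ∈ Finset.Icc 1 t, Real.sqrt (z s) / h s := by
    intro K hK t ht
    apply Finset.sum_le_sum_of_subset_of_nonneg
    · intro x hx
      rcases mem_filter.mp hx with ⟨hxK, hxt⟩
      exact mem_Icc.mpr ⟨(mem_Icc.mp (hK hxK)).1, hxt⟩
    · intro i hi _
      have hiI : i ∈ Finset.Icc 1 T := by
        rw [mem_Icc] at hi ⊢
        exact ⟨hi.1, le_trans hi.2 (mem_Icc.mp (hK ht)).2⟩
      exact div_nonneg (Real.sqrt_nonneg _) (hh i hiI).le
  have bucket_bound : ∀ (K : Finset ℕ) (H : ℝ), K ⊆ Finset.Icc 1 T → (∀ t ∈ K, h t ≤ H) →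
      ∑ t ∈ K, Real.sqrt (z t) / (∑ s ∈ Finset.Icc 1 t, Real.sqrt (z s) / h s) ^ ((1:ℝ)/3)
        ≤ 3/2 * H ^ ((1:ℝ)/3) * (∑ t ∈ K, Real.sqrt (z t)) ^ ((2:ℝ)/3) := by
    intro K H hK hHK
    exact core_lemma (fun t => Real.sqrt (z t)) h
      (fun t => ∑ s ∈ Finset.Icc 1 t, Real.sqrt (z s) / h s) H K
      (fun s _ => Real.sqrt_nonneg _) (fun s hs => hh s (hK hs)) hHK (hBle K hK)
  -- Bound B (easy bound)
  have boundB : G1 T z h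
      ≤ 3/2 * (∑ t ∈ Finset.Icc 1 T, Real.sqrt (z t * hmax)) ^ ((2:ℝ)/3) := by
    rw [hG1]
    refine le_trans (bucket_bound (Finset.Icc 1 T) hmax (subset_refl _) hhsub) (le_of_eq ?_)
    have hsummul : ∑ t ∈ Finset.Icc 1 T, Real.sqrt (z t * hmax)
        = (∑ t ∈ Finset.Icc 1 T, Real.sqrt (z t)) * Real.sqrt hmax := by
      rw [sum_mul]
      exact sum_congr rfl fun t ht => Real.sqrt_mul (hz t ht) hmax
    rw [hsummul, Real.mul_rpow (sum_nonneg fun t _ => Real.sqrt_nonneg _) (Real.sqrt_nonneg _),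
      Real.sqrt_eq_rpow, ← Real.rpow_mul hmaxpos.le]
    norm_num
    ring
  -- bucket index
  have hex : ∀ t ∈ Finset.Icc 1 T, ∃ j : ℕ, hmax < h t * 2 ^ (j+1) := by
    intro t ht
    obtain ⟨n, hn⟩ := pow_unbounded_of_one_lt (hmax / h t) (one_lt_two (α := ℝ))
    refine ⟨n, ?_⟩
    have hht := hh t ht
    rw [div_lt_iff₀ hht] at hn
    have h2 : (2:ℝ)^n ≤ 2^(n+1) := by
      apply pow_le_pow_right₀ (by norm_num) (Nat.le_succ n)
    nlinarith
  set c : ℕ → ℕ := fun t =>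
    if htI : t ∈ Finset.Icc 1 T then min J (Nat.find (hex t htI)) else 0 with hc_def
  have hcc : ∀ t (ht : t ∈ Finset.Icc 1 T), c t = min J (Nat.find (hex t ht)) := by
    intro t ht
    simp only [hc_def, dif_pos ht]
  have hcle : ∀ t ∈ Finset.Icc 1 T, c t ≤ J := by
    intro t ht; rw [hcc t ht]; exact min_le_left _ _
  have hub : ∀ t ∈ Finset.Icc 1 T, h t * 2 ^ (c t) ≤ hmax := by
    intro t ht
    rcases Nat.eq_zero_or_pos (c t) with h0 | hpos
    · rw [h0, pow_zero, mul_one]; exact hhsub t ht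
    · obtain ⟨k', hk'⟩ : ∃ k', c t = k' + 1 :=
        ⟨c t - 1, (Nat.succ_pred_eq_of_pos hpos).symm⟩
      have hlt : k' < Nat.find (hex t ht) := by
        have h5 : k' + 1 ≤ min J (Nat.find (hex t ht)) := by rw [← hcc t ht, ← hk']
        have := le_trans h5 (min_le_right _ _)
        omega
      have hmin := Nat.find_min (hex t ht) hlt
      rw [hk']
      exact not_lt.mp hmin
  have hlb : ∀ t ∈ Finset.Icc 1 T, c t < J → hmax < h t * 2 ^ (c t + 1) := by
    intro t ht hcJ
    have h1 : c t = Nat.find (hex t ht) := by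
      rw [hcc t ht] at hcJ ⊢
      rcases min_lt_iff.mp hcJ with h | h
      · exact absurd h (lt_irrefl J)
      · exact min_eq_right h.le
    rw [h1]
    exact Nat.find_spec (hex t ht)
  -- fiberwise decomposition
  have hmaps : ∀ t ∈ Finset.Icc 1 T, c t ∈ range (J+1) :=
    fun t ht => mem_range.mpr (Nat.lt_succ_of_le (hcle t ht))
  have hsplit : ∑ j ∈ range (J+1), ∑ t ∈ (Finset.Icc 1 T).filter (fun t => c t = j),
        Real.sqrt (z t) / (∑ s ∈ Finset.Icc 1 t, Real.sqrt (z s) / h s) ^ ((1:ℝ)/3)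
      = ∑ t ∈ Finset.Icc 1 T,
        Real.sqrt (z t) / (∑ s ∈ Finset.Icc 1 t, Real.sqrt (z s) / h s) ^ ((1:ℝ)/3) :=
    Finset.sum_fiberwise_of_maps_to hmaps _
  have hsplitv : ∑ j ∈ range (J+1), ∑ t ∈ (Finset.Icc 1 T).filter (fun t => c t = j),
        Real.sqrt (z t * h t)
      = ∑ t ∈ Finset.Icc 1 T, Real.sqrt (z t * h t) :=
    Finset.sum_fiberwise_of_maps_to hmaps _
  -- per-bucket application of the core lemma
  have bb : ∀ j ∈ range (J+1),
      ∑ t ∈ (Finset.Icc 1 T).filter (fun t => c t = j),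
        Real.sqrt (z t) / (∑ s ∈ Finset.Icc 1 t, Real.sqrt (z s) / h s) ^ ((1:ℝ)/3)
      ≤ 3/2 * (hmax / 2^j) ^ ((1:ℝ)/3)
        * (∑ t ∈ (Finset.Icc 1 T).filter (fun t => c t = j), Real.sqrt (z t)) ^ ((2:ℝ)/3) := by
    intro j hj
    apply bucket_bound _ _ (filter_subset _ _)
    intro t ht
    rcases mem_filter.mp ht with ⟨htI, hct⟩
    rw [le_div_iff₀ (pow_pos two_pos j)]
    rw [← hct]
    exact hub t htI
  -- head buckets: replace √z by √(z h)
  have headj : ∀ j, j < J →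
      3/2 * (hmax / 2^j) ^ ((1:ℝ)/3)
        * (∑ t ∈ (Finset.Icc 1 T).filter (fun t => c t = j), Real.sqrt (z t)) ^ ((2:ℝ)/3)
      ≤ 3/2 * (2:ℝ) ^ ((1:ℝ)/3)
        * (∑ t ∈ (Finset.Icc 1 T).filter (fun t => c t = j), Real.sqrt (z t * h t)) ^ ((2:ℝ)/3) := by
    intro j hjJ
    have hwpos : (0:ℝ) < hmax / 2 ^ (j+1) := div_pos hmaxpos (pow_pos two_pos _)
    have hSann : (0:ℝ) ≤ ∑ t ∈ (Finset.Icc 1 T).filter (fun t => c t = j), Real.sqrt (z t) :=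
      sum_nonneg fun t _ => Real.sqrt_nonneg _
    have hSvnn : (0:ℝ) ≤ ∑ t ∈ (Finset.Icc 1 T).filter (fun t => c t = j),
        Real.sqrt (z t * h t) := sum_nonneg fun t _ => Real.sqrt_nonneg _
    have hSa_le : ∑ t ∈ (Finset.Icc 1 T).filter (fun t => c t = j), Real.sqrt (z t)
        ≤ (∑ t ∈ (Finset.Icc 1 T).filter (fun t => c t = j), Real.sqrt (z t * h t))
          / Real.sqrt (hmax / 2 ^ (j+1)) := by
      rw [le_div_iff₀ (Real.sqrt_pos.mpr hwpos), sum_mul]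
      apply sum_le_sum
      intro t ht
      rcases mem_filter.mp ht with ⟨htI, hct⟩
      have hwh : hmax / 2 ^ (j+1) < h t := by
        rw [div_lt_iff₀ (pow_pos two_pos _)]
        have := hlb t htI (by rw [hct]; exact hjJ)
        rw [hct] at this
        exact this
      calc Real.sqrt (z t) * Real.sqrt (hmax / 2 ^ (j+1))
          ≤ Real.sqrt (z t) * Real.sqrt (h t) :=
            mul_le_mul_of_nonneg_left (Real.sqrt_le_sqrt hwh.le) (Real.sqrt_nonneg _)
        _ = Real.sqrt (z t * h t) := (Real.sqrt_mul (hz t htI) (h t)).symm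
    have hfac : (hmax / 2^j : ℝ) ^ ((1:ℝ)/3)
        = 2 ^ ((1:ℝ)/3) * (hmax / 2 ^ (j+1)) ^ ((1:ℝ)/3) := by
      rw [← Real.mul_rpow (by norm_num : (0:ℝ) ≤ 2) hwpos.le]
      congr 1
      rw [pow_succ]
      field_simp
    have hdiv : ((∑ t ∈ (Finset.Icc 1 T).filter (fun t => c t = j), Real.sqrt (z t * h t))
          / Real.sqrt (hmax / 2 ^ (j+1))) ^ ((2:ℝ)/3)
        = (∑ t ∈ (Finset.Icc 1 T).filter (fun t => c t = j), Real.sqrt (z t * h t)) ^ ((2:ℝ)/3)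
          / (hmax / 2 ^ (j+1)) ^ ((1:ℝ)/3) := by
      rw [Real.div_rpow hSvnn (Real.sqrt_nonneg _), Real.sqrt_eq_rpow,
        ← Real.rpow_mul hwpos.le]
      norm_num
    have hwne : ((hmax / 2 ^ (j+1) : ℝ)) ^ ((1:ℝ)/3) ≠ 0 :=
      ne_of_gt (Real.rpow_pos_of_pos hwpos _)
    calc 3/2 * (hmax / 2^j) ^ ((1:ℝ)/3)
          * (∑ t ∈ (Finset.Icc 1 T).filter (fun t => c t = j), Real.sqrt (z t)) ^ ((2:ℝ)/3)
        ≤ 3/2 * (hmax / 2^j) ^ ((1:ℝ)/3)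
          * ((∑ t ∈ (Finset.Icc 1 T).filter (fun t => c t = j), Real.sqrt (z t * h t))
            / Real.sqrt (hmax / 2 ^ (j+1))) ^ ((2:ℝ)/3) := by
          apply mul_le_mul_of_nonneg_left
            (Real.rpow_le_rpow hSann hSa_le (by norm_num))
          positivity
      _ = 3/2 * (2:ℝ) ^ ((1:ℝ)/3)
          * (∑ t ∈ (Finset.Icc 1 T).filter (fun t => c t = j),
              Real.sqrt (z t * h t)) ^ ((2:ℝ)/3) := by
          rw [hdiv, hfac]
          field_simp
  -- head sum
  have hSvtot_nn : (0:ℝ) ≤ ∑ t ∈ Finset.Icc 1 T, Real.sqrt (z t * h t) :=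
    sum_nonneg fun t _ => Real.sqrt_nonneg _
  have head : ∑ j ∈ range J, ∑ t ∈ (Finset.Icc 1 T).filter (fun t => c t = j),
        Real.sqrt (z t) / (∑ s ∈ Finset.Icc 1 t, Real.sqrt (z s) / h s) ^ ((1:ℝ)/3)
      ≤ 3/2 * (Real.sqrt (2 * (J:ℝ))
          * ∑ t ∈ Finset.Icc 1 T, Real.sqrt (z t * h t)) ^ ((2:ℝ)/3) := by
    have step : ∀ j ∈ range J,
        ∑ t ∈ (Finset.Icc 1 T).filter (fun t => c t = j),
          Real.sqrt (z t) / (∑ s ∈ Finset.Icc 1 t, Real.sqrt (z s) / h s) ^ ((1:ℝ)/3)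
        ≤ 3/2 * (2:ℝ) ^ ((1:ℝ)/3)
          * (∑ t ∈ (Finset.Icc 1 T).filter (fun t => c t = j),
              Real.sqrt (z t * h t)) ^ ((2:ℝ)/3) := by
      intro j hj
      have hjJ : j < J := mem_range.mp hj
      exact le_trans (bb j (mem_range.mpr (Nat.lt_succ_of_lt hjJ))) (headj j hjJ)
    have hVb_le : ∑ j ∈ range J, ∑ t ∈ (Finset.Icc 1 T).filter (fun t => c t = j),
          Real.sqrt (z t * h t)
        ≤ ∑ t ∈ Finset.Icc 1 T, Real.sqrt (z t * h t) := by
      rw [← hsplitv]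
      apply Finset.sum_le_sum_of_subset_of_nonneg (range_subset_range.mpr (Nat.le_succ J))
      intro i _ _
      exact sum_nonneg fun t _ => Real.sqrt_nonneg _
    have hVbj_nn : ∀ j ∈ range J,
        (0:ℝ) ≤ ∑ t ∈ (Finset.Icc 1 T).filter (fun t => c t = j), Real.sqrt (z t * h t) :=
      fun j _ => sum_nonneg fun t _ => Real.sqrt_nonneg _
    have hVb_nn : (0:ℝ) ≤ ∑ j ∈ range J,
        ∑ t ∈ (Finset.Icc 1 T).filter (fun t => c t = j), Real.sqrt (z t * h t) :=
      sum_nonneg hVbj_nn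
    have e1 : (Real.sqrt (2*(J:ℝ))) ^ ((2:ℝ)/3) = (2*(J:ℝ)) ^ ((1:ℝ)/3) := by
      rw [Real.sqrt_eq_rpow, ← Real.rpow_mul (by positivity)]
      norm_num
    have e2 : ((2:ℝ)*(J:ℝ)) ^ ((1:ℝ)/3) = 2 ^ ((1:ℝ)/3) * (J:ℝ) ^ ((1:ℝ)/3) :=
      Real.mul_rpow (by norm_num) (by positivity)
    calc ∑ j ∈ range J, ∑ t ∈ (Finset.Icc 1 T).filter (fun t => c t = j),
          Real.sqrt (z t) / (∑ s ∈ Finset.Icc 1 t, Real.sqrt (z s) / h s) ^ ((1:ℝ)/3)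
        ≤ ∑ j ∈ range J, 3/2 * (2:ℝ) ^ ((1:ℝ)/3)
          * (∑ t ∈ (Finset.Icc 1 T).filter (fun t => c t = j),
              Real.sqrt (z t * h t)) ^ ((2:ℝ)/3) := sum_le_sum step
      _ = 3/2 * (2:ℝ) ^ ((1:ℝ)/3) * ∑ j ∈ range J,
          (∑ t ∈ (Finset.Icc 1 T).filter (fun t => c t = j),
              Real.sqrt (z t * h t)) ^ ((2:ℝ)/3) := by rw [mul_sum]
      _ ≤ 3/2 * (2:ℝ) ^ ((1:ℝ)/3) * ((J:ℝ) ^ ((1:ℝ)/3)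
          * (∑ j ∈ range J, ∑ t ∈ (Finset.Icc 1 T).filter (fun t => c t = j),
              Real.sqrt (z t * h t)) ^ ((2:ℝ)/3)) := by
          apply mul_le_mul_of_nonneg_left _ (by positivity)
          exact sum_rpow23_le J _ hVbj_nn
      _ ≤ 3/2 * (2:ℝ) ^ ((1:ℝ)/3) * ((J:ℝ) ^ ((1:ℝ)/3)
          * (∑ t ∈ Finset.Icc 1 T, Real.sqrt (z t * h t)) ^ ((2:ℝ)/3)) := by
          apply mul_le_mul_of_nonneg_left _ (by positivity)
          apply mul_le_mul_of_nonneg_left _ (by positivity)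
          exact Real.rpow_le_rpow hVb_nn hVb_le (by norm_num)
      _ = 3/2 * (Real.sqrt (2 * (J:ℝ))
          * ∑ t ∈ Finset.Icc 1 T, Real.sqrt (z t * h t)) ^ ((2:ℝ)/3) := by
          rw [Real.mul_rpow (Real.sqrt_nonneg _) hSvtot_nn, e1, e2]
          ring
  -- tail bucket
  have tail : ∑ t ∈ (Finset.Icc 1 T).filter (fun t => c t = J),
        Real.sqrt (z t) / (∑ s ∈ Finset.Icc 1 t, Real.sqrt (z s) / h s) ^ ((1:ℝ)/3)
      ≤ 3/2 * (((2:ℝ) ^ (-(J:ℝ)/2) * Real.sqrt (zmax*hmax)) ^ ((2:ℝ)/3)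
          * (T:ℝ) ^ ((2:ℝ)/3)) := by
    refine le_trans (bb J (mem_range.mpr (Nat.lt_succ_self J))) ?_
    have hSann : (0:ℝ) ≤ ∑ t ∈ (Finset.Icc 1 T).filter (fun t => c t = J), Real.sqrt (z t) :=
      sum_nonneg fun t _ => Real.sqrt_nonneg _
    have hSale : (∑ t ∈ (Finset.Icc 1 T).filter (fun t => c t = J), Real.sqrt (z t))
        ≤ (T:ℝ) * Real.sqrt zmax := by
      calc ∑ t ∈ (Finset.Icc 1 T).filter (fun t => c t = J), Real.sqrt (z t)
          ≤ ∑ _t ∈ (Finset.Icc 1 T).filter (fun t => c t = J), Real.sqrt zmax := by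
            apply sum_le_sum
            intro t ht
            exact Real.sqrt_le_sqrt (hzsub t (filter_subset _ _ ht))
        _ = ((Finset.Icc 1 T).filter (fun t => c t = J)).card * Real.sqrt zmax := by
            rw [sum_const, nsmul_eq_mul]
        _ ≤ (T:ℝ) * Real.sqrt zmax := by
            apply mul_le_mul_of_nonneg_right _ (Real.sqrt_nonneg _)
            have h1 : ((Finset.Icc 1 T).filter (fun t => c t = J)).card
                ≤ (Finset.Icc 1 T).card := card_filter_le _ _
            have h2 : (Finset.Icc 1 T).card = T := by rw [Nat.card_Icc]; omega
            exact_mod_cast le_trans h1 (le_of_eq h2)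
    have iden : ((hmax / 2^J : ℝ)) ^ ((1:ℝ)/3) * ((T:ℝ) * Real.sqrt zmax) ^ ((2:ℝ)/3)
        = ((2:ℝ) ^ (-(J:ℝ)/2) * Real.sqrt (zmax*hmax)) ^ ((2:ℝ)/3) * (T:ℝ) ^ ((2:ℝ)/3) := by
      have hpowJ : ((2:ℝ)^J : ℝ) = (2:ℝ) ^ ((J:ℕ):ℝ) := (Real.rpow_natCast 2 J).symm
      have l1 : ((hmax / 2^J : ℝ)) ^ ((1:ℝ)/3)
          = hmax ^ ((1:ℝ)/3) * (2:ℝ) ^ (-(J:ℝ)/3) := by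
        rw [Real.div_rpow hmaxpos.le (by positivity), hpowJ, ← Real.rpow_mul (by norm_num),
          div_eq_mul_inv, ← Real.rpow_neg (by norm_num)]
        congr 1
        ring
      have l2 : ((T:ℝ) * Real.sqrt zmax) ^ ((2:ℝ)/3)
          = (T:ℝ) ^ ((2:ℝ)/3) * zmax ^ ((1:ℝ)/3) := by
        rw [Real.mul_rpow (by positivity) (Real.sqrt_nonneg _), Real.sqrt_eq_rpow,
          ← Real.rpow_mul hzmaxnn]
        norm_num
      have l3 : ((2:ℝ) ^ (-(J:ℝ)/2) * Real.sqrt (zmax*hmax)) ^ ((2:ℝ)/3)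
          = (2:ℝ) ^ (-(J:ℝ)/3) * (zmax ^ ((1:ℝ)/3) * hmax ^ ((1:ℝ)/3)) := by
        rw [Real.mul_rpow (by positivity) (Real.sqrt_nonneg _), Real.sqrt_eq_rpow,
          ← Real.rpow_mul (by positivity : (0:ℝ) ≤ zmax * hmax),
          ← Real.rpow_mul (by norm_num : (0:ℝ) ≤ 2)]
        have : (-(J:ℝ)/2) * (2/3) = -(J:ℝ)/3 := by ring
        rw [this]
        have : (zmax * hmax) ^ ((1:ℝ)/2 * (2/3)) = (zmax * hmax) ^ ((1:ℝ)/3) := by norm_num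
        rw [this, Real.mul_rpow hzmaxnn hmaxpos.le]
      rw [l1, l2, l3]
      ring
    calc 3/2 * (hmax / 2^J) ^ ((1:ℝ)/3)
          * (∑ t ∈ (Finset.Icc 1 T).filter (fun t => c t = J), Real.sqrt (z t)) ^ ((2:ℝ)/3)
        ≤ 3/2 * (hmax / 2^J) ^ ((1:ℝ)/3) * ((T:ℝ) * Real.sqrt zmax) ^ ((2:ℝ)/3) := by
          apply mul_le_mul_of_nonneg_left
            (Real.rpow_le_rpow hSann hSale (by norm_num))
          positivity
      _ = 3/2 * (((2:ℝ) ^ (-(J:ℝ)/2) * Real.sqrt (zmax*hmax)) ^ ((2:ℝ)/3)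
          * (T:ℝ) ^ ((2:ℝ)/3)) := by rw [mul_assoc, iden]
  -- combine into bound A
  have boundA : G1 T z h
      ≤ 3/2 * ((Real.sqrt (2 * (J:ℝ))
          * ∑ t ∈ Finset.Icc 1 T, Real.sqrt (z t * h t)) ^ ((2:ℝ)/3)
        + ((2:ℝ) ^ (-(J:ℝ)/2) * Real.sqrt (zmax*hmax)) ^ ((2:ℝ)/3) * (T:ℝ) ^ ((2:ℝ)/3)) := by
    rw [hG1, ← hsplit, sum_range_succ]
    calc (∑ j ∈ range J, ∑ t ∈ (Finset.Icc 1 T).filter (fun t => c t = j),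
            Real.sqrt (z t) / (∑ s ∈ Finset.Icc 1 t, Real.sqrt (z s) / h s) ^ ((1:ℝ)/3))
          + ∑ t ∈ (Finset.Icc 1 T).filter (fun t => c t = J),
            Real.sqrt (z t) / (∑ s ∈ Finset.Icc 1 t, Real.sqrt (z s) / h s) ^ ((1:ℝ)/3)
        ≤ 3/2 * (Real.sqrt (2 * (J:ℝ))
            * ∑ t ∈ Finset.Icc 1 T, Real.sqrt (z t * h t)) ^ ((2:ℝ)/3)
          + 3/2 * (((2:ℝ) ^ (-(J:ℝ)/2) * Real.sqrt (zmax*hmax)) ^ ((2:ℝ)/3)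
            * (T:ℝ) ^ ((2:ℝ)/3)) := add_le_add head tail
      _ = 3/2 * ((Real.sqrt (2 * (J:ℝ))
            * ∑ t ∈ Finset.Icc 1 T, Real.sqrt (z t * h t)) ^ ((2:ℝ)/3)
          + ((2:ℝ) ^ (-(J:ℝ)/2) * Real.sqrt (zmax*hmax)) ^ ((2:ℝ)/3)
            * (T:ℝ) ^ ((2:ℝ)/3)) := by ring
  -- finish with the min
  rcases le_total
      ((Real.sqrt (2 * (J:ℝ)) * ∑ t ∈ Finset.Icc 1 T, Real.sqrt (z t * h t)) ^ ((2:ℝ)/3)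
        + ((2:ℝ) ^ (-(J:ℝ)/2) * Real.sqrt (zmax*hmax)) ^ ((2:ℝ)/3) * (T:ℝ) ^ ((2:ℝ)/3))
      ((∑ t ∈ Finset.Icc 1 T, Real.sqrt (z t * hmax)) ^ ((2:ℝ)/3)) with hmin | hmin
  · rw [min_eq_left hmin]
    exact boundA
  · rw [min_eq_right hmin]
    exact boundB
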